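/- For every integer d ≥ 10, (1 − (log d)/(2d))^{d/2} ≥ (13/280) · (log d)/√d. -/
import Mathlib


/-- For every integer `d ≥ 10`,
`(1 - (log d)/(2d))^{d/2} ≥ (13/280) · (log d)/√d`. -/
theorem key_real_inequality
    (d : ℕ) (hd : 10 ≤ d) :
    (13 / 280) * Real.log d / Real.sqrt d ≤
      (1 - Real.log d / (2 * d)) ^ ((d : ℝ) / 2) := by
  have hD : (10:ℝ) ≤ (d:ℝ) := by exact_mod_cast hd
  set D : ℝ := (d:ℝ) with hDdef
  have hD0 : (0:ℝ) < D := by linarith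
  have hD1 : (1:ℝ) < D := by linarith
  set L : ℝ := Real.log D with hLdef
  have hL : 0 < L := Real.log_pos hD1
  -- log D ≤ D / 2
  have hs : Real.sqrt D ^ 2 = D := Real.sq_sqrt hD0.le
  have hlogsqrt : Real.log (Real.sqrt D) ≤ Real.sqrt D - 1 :=
    Real.log_le_sub_one_of_pos (Real.sqrt_pos.mpr hD0)
  have h2 : L = 2 * Real.log (Real.sqrt D) := by
    rw [hLdef, Real.log_sqrt hD0.le]; ring
  have hlogD : L ≤ D / 2 := by nlinarith [sq_nonneg (Real.sqrt D - 2)]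
  set x : ℝ := L / (2 * D) with hxdef
  have hx0 : 0 < x := by positivity
  have hx4 : x ≤ 1/4 := by
    rw [hxdef, div_le_div_iff₀ (by positivity) (by norm_num)]
    linarith
  have h1x0 : 0 < 1 - x := by linarith
  -- exp (-(4/3) x) ≤ 1 - x
  have hexp : Real.exp (-(4/3) * x) ≤ 1 - x := by
    have h1 : 1 + (4/3) * x ≤ Real.exp ((4/3) * x) := by linarith [Real.add_one_le_exp ((4/3) * x)]
    have he0 : 0 < Real.exp ((4/3) * x) := Real.exp_pos _
    rw [show (-(4/3) * x) = -((4/3) * x) by ring, Real.exp_neg]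
    rw [inv_le_iff_one_le_mul₀ he0] at *
    nlinarith
  -- (1 - x) ^ (D/2) ≥ exp (-L/3)
  have hpow : Real.exp (-L/3) ≤ (1 - x) ^ (D / 2) := by
    calc Real.exp (-L/3) = Real.exp (-(4/3) * x) ^ (D / 2) := by
          rw [← Real.exp_mul]
          congr 1
          rw [hxdef]
          field_simp
          ring
      _ ≤ (1 - x) ^ (D / 2) :=
          Real.rpow_le_rpow (Real.exp_pos _).le hexp (by positivity)
  -- exp (-L/3) = D ^ (-(1/3))
  have hDexp : Real.exp (-L/3) = D ^ (-(1/3) : ℝ) := by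
    rw [Real.rpow_def_of_pos hD0, ← hLdef]
    congr 1; ring
  -- (13/280) L ≤ D ^ (1/6)
  have hlog6 : (13/280) * L ≤ D ^ ((1:ℝ)/6) := by
    have := Real.log_le_rpow_div hD0.le (show (0:ℝ) < 1/6 by norm_num)
    have hp : 0 < D ^ ((1:ℝ)/6) := Real.rpow_pos_of_pos hD0 _
    rw [← hLdef] at this
    nlinarith
  -- finish
  have hsqrt : Real.sqrt D = D ^ ((1:ℝ)/2) := Real.sqrt_eq_rpow D
  have hsplit : D ^ ((1:ℝ)/6) = D ^ ((1:ℝ)/2) * D ^ (-(1/3) : ℝ) := by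
    rw [← Real.rpow_add hD0]; norm_num
  have hsq0 : 0 < Real.sqrt D := Real.sqrt_pos.mpr hD0
  have hfinal : (13/280) * L / Real.sqrt D ≤ D ^ (-(1/3) : ℝ) := by
    rw [div_le_iff₀ hsq0, hsqrt]
    calc (13/280) * L ≤ D ^ ((1:ℝ)/6) := hlog6
      _ = D ^ (-(1/3) : ℝ) * D ^ ((1:ℝ)/2) := by rw [hsplit]; ring
  calc (13/280) * L / Real.sqrt D ≤ D ^ (-(1/3) : ℝ) := hfinal
    _ = Real.exp (-L/3) := hDexp.symm
    _ ≤ (1 - x) ^ (D/2) := hpow
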